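/- Consider a time-invariant digraph D = (V, E) in which each normal node updates its value according to discrete-time ARC-P with parameter F, and suppose the set of malicious adversary nodes is F-totally bounded (|A| ≤ F). If D is (F+1,F+1)-robust, then the normal nodes achieve resilient asymptotic consensus: there exists L ∈ ℝ such that lim_{t→∞} x_i[t] = L for every normal node i, and x_i[t] ∈ [m[0], M[0]] for all t and all normal i, for any choice of initial values, any valid weight sequences, and any adversary value trajectories. -/

import Mathlib

/-- The in-neighbors of node `i` in the digraph with edge set `E`:
`V_i = {j : (j, i) ∈ E}`. -/
def inNbrs {V : Type*} [Fintype V] [DecidableEq V] (E : Finset (V × V)) (i : V) : Finset V :=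
  Finset.univ.filter (fun j => (j, i) ∈ E)

/-- `X_S = {i ∈ S : |V_i \ S| ≥ r}`, the set of nodes of `S` with at least `r`
in-neighbors outside of `S`. -/
def reachSet {V : Type*} [Fintype V] [DecidableEq V] (E : Finset (V × V)) (r : ℕ)
    (S : Finset V) : Finset V :=
  S.filter (fun i => r ≤ ((inNbrs E i) \ S).card)

/-- `(r,s)`-robustness of the digraph with edge set `E`. -/
def RSRobust {V : Type*} [Fintype V] [DecidableEq V] (E : Finset (V × V)) (r s : ℕ) : Prop :=
  ∀ S1 S2 : Finset V, S1.Nonempty → S2.Nonempty → Disjoint S1 S2 →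
    (reachSet E r S1).card = S1.card ∨ (reachSet E r S2).card = S2.card ∨
    s ≤ (reachSet E r S1).card + (reachSet E r S2).card

/-- `R` is a valid ARC-P removed set with parameter `F` for a node `i` with
in-neighbor set `Vi` and current values `xt` : it is the union of a set `Ra` of
removed larger values and a set `Rb` of removed smaller values.  If fewer than
(or exactly) `F` in-neighbors have values strictly larger than `xt i`, then all
of them are removed; otherwise exactly `F` in-neighbors carrying the largest
values are removed (ties broken arbitrarily/deterministically).  Likewise for
the strictly smaller values. -/
def ValidRemoved {V : Type*} [DecidableEq V] (Vi : Finset V) (xt : V → ℝ) (i : V) (F : ℕ)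
    (R : Finset V) : Prop :=
  ∃ Ra Rb : Finset V,
    R = Ra ∪ Rb ∧
    Ra ⊆ Vi.filter (fun j => xt i < xt j) ∧
    ((Ra = Vi.filter (fun j => xt i < xt j) ∧ Ra.card ≤ F) ∨
      (Ra.card = F ∧ ∀ j ∈ Ra, ∀ k ∈ (Vi.filter (fun j => xt i < xt j)) \ Ra, xt k ≤ xt j)) ∧
    Rb ⊆ Vi.filter (fun j => xt j < xt i) ∧
    ((Rb = Vi.filter (fun j => xt j < xt i) ∧ Rb.card ≤ F) ∨
      (Rb.card = F ∧ ∀ j ∈ Rb, ∀ k ∈ (Vi.filter (fun j => xt j < xt i)) \ Rb, xt j ≤ xt k))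

/-- Node `i` performs the discrete-time ARC-P update with parameter `F` at time `t`
on the digraph with edge set `E`: the removed set `R t i` is valid, the weights on the
kept inclusive neighbors are at least `α` and sum to `1`, and the new value is the
corresponding weighted average of the kept values. -/
def ArcpUpdate {V : Type*} [Fintype V] [DecidableEq V] (E : Finset (V × V)) (F : ℕ) (α : ℝ)
    (x : ℕ → V → ℝ) (R : ℕ → V → Finset V) (w : ℕ → V → V → ℝ) (i : V) (t : ℕ) : Prop :=
  ValidRemoved (inNbrs E i) (x t) i F (R t i) ∧
  (∀ j ∈ (insert i (inNbrs E i)) \ R t i, α ≤ w t i j) ∧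
  (∑ j ∈ (insert i (inNbrs E i)) \ R t i, w t i j) = 1 ∧
  x (t + 1) i = ∑ j ∈ (insert i (inNbrs E i)) \ R t i, w t i j * x t j

set_option linter.unusedSectionVars false

section Helpers

variable {V : Type*} [Fintype V] [DecidableEq V]

lemma cvx_upper {α B c : ℝ} (hα : 0 < α) {s : Finset V} {w y : V → ℝ}
    (hw : ∀ j ∈ s, α ≤ w j) (hsum : ∑ j ∈ s, w j = 1) {j₀ : V} (hj₀ : j₀ ∈ s)
    (hB : ∀ j ∈ s, y j ≤ B) (hc : y j₀ ≤ c) (hcB : c ≤ B) :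
    ∑ j ∈ s, w j * y j ≤ α * c + (1 - α) * B := by
  have hw0 : α ≤ w j₀ := hw _ hj₀
  have h1 : w j₀ ≤ 1 := by
    rw [← hsum]
    exact Finset.single_le_sum (fun i hi => le_trans hα.le (hw i hi)) hj₀
  have hsplit : ∑ j ∈ s, w j * y j = w j₀ * y j₀ + ∑ j ∈ s.erase j₀, w j * y j :=
    (Finset.add_sum_erase s _ hj₀).symm
  have htail : ∑ j ∈ s.erase j₀, w j * y j ≤ ∑ j ∈ s.erase j₀, w j * B :=
    Finset.sum_le_sum fun j hj =>
      mul_le_mul_of_nonneg_left (hB j (Finset.mem_of_mem_erase hj))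
        (le_trans hα.le (hw j (Finset.mem_of_mem_erase hj)))
  have hes : ∑ j ∈ s.erase j₀, w j = 1 - w j₀ := by
    have := Finset.add_sum_erase s w hj₀
    linarith
  have h2 : ∑ j ∈ s.erase j₀, w j * B = (1 - w j₀) * B := by
    rw [← Finset.sum_mul, hes]
  have hcon : w j₀ * y j₀ ≤ w j₀ * c :=
    mul_le_mul_of_nonneg_left hc (le_trans hα.le hw0)
  nlinarith [mul_nonneg (sub_nonneg.2 hw0) (sub_nonneg.2 hcB)]

lemma cvx_lower {α B c : ℝ} (hα : 0 < α) {s : Finset V} {w y : V → ℝ}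
    (hw : ∀ j ∈ s, α ≤ w j) (hsum : ∑ j ∈ s, w j = 1) {j₀ : V} (hj₀ : j₀ ∈ s)
    (hB : ∀ j ∈ s, B ≤ y j) (hc : c ≤ y j₀) (hcB : B ≤ c) :
    α * c + (1 - α) * B ≤ ∑ j ∈ s, w j * y j := by
  have h := cvx_upper (y := fun j => -y j) (B := -B) (c := -c) hα hw hsum hj₀
    (fun j hj => neg_le_neg (hB j hj)) (neg_le_neg hc) (neg_le_neg hcB)
  have hneg : ∑ j ∈ s, w j * (fun j => -y j) j = -∑ j ∈ s, w j * y j := by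
    rw [← Finset.sum_neg_distrib]
    exact Finset.sum_congr rfl fun j _ => by ring
  rw [hneg] at h
  linarith

variable (E : Finset (V × V)) (A : Finset V) (F : ℕ) (α : ℝ)
  (x : ℕ → V → ℝ) (R : ℕ → V → Finset V) (w : ℕ → V → V → ℝ)

lemma kept_self (hsimple : ∀ i : V, (i, i) ∉ E) (t : ℕ) (i : V)
    (hval : ValidRemoved (inNbrs E i) (x t) i F (R t i)) :
    i ∈ (insert i (inNbrs E i)) \ R t i := by
  obtain ⟨Ra, Rb, hR, hRa_sub, _, hRb_sub, _⟩ := hval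
  have hiV : i ∉ inNbrs E i := by simp [inNbrs, hsimple i]
  refine Finset.mem_sdiff.2 ⟨Finset.mem_insert_self _ _, ?_⟩
  rw [hR]
  simp only [Finset.mem_union]
  rintro (h | h)
  · exact hiV (Finset.mem_filter.1 (hRa_sub h)).1
  · exact hiV (Finset.mem_filter.1 (hRb_sub h)).1

lemma kept_le (hN : (Finset.univ \ A).Nonempty) (hA : A.card ≤ F) (t : ℕ) (i : V) (hi : i ∉ A)
    (hval : ValidRemoved (inNbrs E i) (x t) i F (R t i)) :
    ∀ j ∈ (insert i (inNbrs E i)) \ R t i, x t j ≤ (Finset.univ \ A).sup' hN (x t) := by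
  intro j hj
  by_contra hcon
  push_neg at hcon
  have hnormal_le : ∀ k : V, k ∉ A → x t k ≤ (Finset.univ \ A).sup' hN (x t) := fun k hk =>
    Finset.le_sup' _ (by simp [hk])
  have hjA : j ∈ A := by
    by_contra hjA; exact absurd (hnormal_le j hjA) (not_le.2 hcon)
  have hxi : x t i < x t j := lt_of_le_of_lt (hnormal_le i hi) hcon
  obtain ⟨hjmem, hjR⟩ := Finset.mem_sdiff.1 hj
  have hjV : j ∈ inNbrs E i := by
    rcases Finset.mem_insert.1 hjmem with h | h
    · exact absurd hxi (by simp [h])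
    · exact h
  obtain ⟨Ra, Rb, hR, hRa_sub, hRa_case, hRb_sub, hRb_case⟩ := hval
  have hjfil : j ∈ (inNbrs E i).filter (fun k => x t i < x t k) := Finset.mem_filter.2 ⟨hjV, hxi⟩
  have hjRa : j ∉ Ra := fun h => hjR (hR ▸ Finset.mem_union_left _ h)
  rcases hRa_case with ⟨heq, _⟩ | ⟨hcard, hmax⟩
  · exact hjRa (heq ▸ hjfil)
  · have hallA : ∀ a ∈ Ra, a ∈ A := by
      intro a ha
      by_contra haA
      have hle : x t j ≤ x t a := hmax a ha j (Finset.mem_sdiff.2 ⟨hjfil, hjRa⟩)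
      exact absurd (hnormal_le a haA) (not_le.2 (lt_of_lt_of_le hcon hle))
    have hsub : insert j Ra ⊆ A := by
      intro a ha; rcases Finset.mem_insert.1 ha with rfl | h
      exacts [hjA, hallA a h]
    have hle := Finset.card_le_card hsub
    rw [Finset.card_insert_of_notMem hjRa, hcard] at hle
    omega

lemma kept_ge (hN : (Finset.univ \ A).Nonempty) (hA : A.card ≤ F) (t : ℕ) (i : V) (hi : i ∉ A)
    (hval : ValidRemoved (inNbrs E i) (x t) i F (R t i)) :
    ∀ j ∈ (insert i (inNbrs E i)) \ R t i, (Finset.univ \ A).inf' hN (x t) ≤ x t j := by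
  intro j hj
  by_contra hcon
  push_neg at hcon
  have hnormal_ge : ∀ k : V, k ∉ A → (Finset.univ \ A).inf' hN (x t) ≤ x t k := fun k hk =>
    Finset.inf'_le _ (by simp [hk])
  have hjA : j ∈ A := by
    by_contra hjA; exact absurd (hnormal_ge j hjA) (not_le.2 hcon)
  have hxi : x t j < x t i := lt_of_lt_of_le hcon (hnormal_ge i hi)
  obtain ⟨hjmem, hjR⟩ := Finset.mem_sdiff.1 hj
  have hjV : j ∈ inNbrs E i := by
    rcases Finset.mem_insert.1 hjmem with h | h
    · exact absurd hxi (by simp [h])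
    · exact h
  obtain ⟨Ra, Rb, hR, hRa_sub, hRa_case, hRb_sub, hRb_case⟩ := hval
  have hjfil : j ∈ (inNbrs E i).filter (fun k => x t k < x t i) := Finset.mem_filter.2 ⟨hjV, hxi⟩
  have hjRb : j ∉ Rb := fun h => hjR (hR ▸ Finset.mem_union_right _ h)
  rcases hRb_case with ⟨heq, _⟩ | ⟨hcard, hmin⟩
  · exact hjRb (heq ▸ hjfil)
  · have hallA : ∀ a ∈ Rb, a ∈ A := by
      intro a ha
      by_contra haA
      have hle : x t a ≤ x t j := hmin a ha j (Finset.mem_sdiff.2 ⟨hjfil, hjRb⟩)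
      exact absurd (hnormal_ge a haA) (not_le.2 (lt_of_le_of_lt hle hcon))
    have hsub : insert j Rb ⊆ A := by
      intro a ha; rcases Finset.mem_insert.1 ha with rfl | h
      exacts [hjA, hallA a h]
    have hle := Finset.card_le_card hsub
    rw [Finset.card_insert_of_notMem hjRb, hcard] at hle
    omega

lemma step_ub (hα0 : 0 < α) (t : ℕ) (i : V) (h : ArcpUpdate E F α x R w i t)
    {c B : ℝ} (hB : ∀ j ∈ (insert i (inNbrs E i)) \ R t i, x t j ≤ B)
    (hc : ∃ j ∈ (insert i (inNbrs E i)) \ R t i, x t j ≤ c) (hcB : c ≤ B) :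
    x (t + 1) i ≤ α * c + (1 - α) * B := by
  obtain ⟨_, hw, hsum, hx⟩ := h
  obtain ⟨j₀, hj₀, hj₀c⟩ := hc
  rw [hx]
  exact cvx_upper hα0 hw hsum hj₀ hB hj₀c hcB

lemma step_lb (hα0 : 0 < α) (t : ℕ) (i : V) (h : ArcpUpdate E F α x R w i t)
    {c B : ℝ} (hB : ∀ j ∈ (insert i (inNbrs E i)) \ R t i, B ≤ x t j)
    (hc : ∃ j ∈ (insert i (inNbrs E i)) \ R t i, c ≤ x t j) (hcB : B ≤ c) :
    α * c + (1 - α) * B ≤ x (t + 1) i := by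
  obtain ⟨_, hw, hsum, hx⟩ := h
  obtain ⟨j₀, hj₀, hj₀c⟩ := hc
  rw [hx]
  exact cvx_lower hα0 hw hsum hj₀ hB hj₀c hcB

end Helpers

section Main

variable {V : Type*} [Fintype V] [DecidableEq V]
  (E : Finset (V × V)) (A : Finset V) (F : ℕ) (α : ℝ)
  (x : ℕ → V → ℝ) (R : ℕ → V → Finset V) (w : ℕ → V → V → ℝ)

lemma M_anti (hsimple : ∀ i : V, (i, i) ∉ E) (hN : (Finset.univ \ A).Nonempty)
    (hα0 : 0 < α) (hA : A.card ≤ F)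
    (hupd : ∀ t : ℕ, ∀ i ∉ A, ArcpUpdate E F α x R w i t) :
    Antitone (fun t => (Finset.univ \ A).sup' hN (x t)) := by
  apply antitone_nat_of_succ_le
  intro t
  apply Finset.sup'_le
  intro i hi
  have hiA : i ∉ A := (Finset.mem_sdiff.1 hi).2
  have hself := kept_self E F x R hsimple t i (hupd t i hiA).1
  have h := step_ub E F α x R w hα0 t i (hupd t i hiA)
    (kept_le E A F x R hN hA t i hiA (hupd t i hiA).1)
    ⟨i, hself, kept_le E A F x R hN hA t i hiA (hupd t i hiA).1 i hself⟩ le_rfl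
  linarith

lemma m_mono (hsimple : ∀ i : V, (i, i) ∉ E) (hN : (Finset.univ \ A).Nonempty)
    (hα0 : 0 < α) (hA : A.card ≤ F)
    (hupd : ∀ t : ℕ, ∀ i ∉ A, ArcpUpdate E F α x R w i t) :
    Monotone (fun t => (Finset.univ \ A).inf' hN (x t)) := by
  apply monotone_nat_of_le_succ
  intro t
  apply Finset.le_inf'
  intro i hi
  have hiA : i ∉ A := (Finset.mem_sdiff.1 hi).2
  have hself := kept_self E F x R hsimple t i (hupd t i hiA).1
  have h := step_lb E F α x R w hα0 t i (hupd t i hiA)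
    (kept_ge E A F x R hN hA t i hiA (hupd t i hiA).1)
    ⟨i, hself, kept_ge E A F x R hN hA t i hiA (hupd t i hiA).1 i hself⟩ le_rfl
  linarith

end Main

section Contraction

variable {V : Type*} [Fintype V] [DecidableEq V]
  (E : Finset (V × V)) (A : Finset V) (F : ℕ) (α : ℝ)
  (x : ℕ → V → ℝ) (R : ℕ → V → Finset V) (w : ℕ → V → V → ℝ)

lemma contraction (hsimple : ∀ i : V, (i, i) ∉ E) (hN : (Finset.univ \ A).Nonempty)
    (hα0 : 0 < α) (hα1 : α < 1) (hA : A.card ≤ F) (hrob : RSRobust E (F + 1) (F + 1))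
    (hupd : ∀ t : ℕ, ∀ i ∉ A, ArcpUpdate E F α x R w i t) (t₀ : ℕ) :
    (Finset.univ \ A).sup' hN (x (t₀ + Fintype.card V))
      - (Finset.univ \ A).inf' hN (x (t₀ + Fintype.card V))
    ≤ (1 - α ^ Fintype.card V / 3) *
      ((Finset.univ \ A).sup' hN (x t₀) - (Finset.univ \ A).inf' hN (x t₀)) := by
  set c := Fintype.card V with hcdef
  set M : ℕ → ℝ := fun t => (Finset.univ \ A).sup' hN (x t) with hM
  set m : ℕ → ℝ := fun t => (Finset.univ \ A).inf' hN (x t) with hm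
  have hMa : ∀ s t : ℕ, s ≤ t → M t ≤ M s := fun s t h =>
    M_anti E A F α x R w hsimple hN hα0 hA hupd h
  have hma : ∀ s t : ℕ, s ≤ t → m s ≤ m t := fun s t h =>
    m_mono E A F α x R w hsimple hN hα0 hA hupd h
  have hmM : ∀ t, m t ≤ M t := by
    intro t
    obtain ⟨i, hi⟩ := hN
    exact le_trans (Finset.inf'_le _ hi) (Finset.le_sup' _ hi)
  have hαc1 : α ^ c ≤ 1 := pow_le_one₀ hα0.le hα1.le
  have hαc0 : 0 < α ^ c := pow_pos hα0 c
  by_cases hψ : M t₀ - m t₀ ≤ 0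
  · have h0 : M t₀ - m t₀ = 0 := le_antisymm hψ (by linarith [hmM t₀])
    have h1 := hMa t₀ (t₀ + c) (Nat.le_add_right _ _)
    have h2 := hma t₀ (t₀ + c) (Nat.le_add_right _ _)
    rw [h0]
    rw [mul_zero]
    linarith
  push_neg at hψ
  set Ψ : ℝ := M t₀ - m t₀ with hΨ
  set ε : ℕ → ℝ := fun k => α ^ k * (Ψ / 3) with hε
  have hεpos : ∀ k, 0 < ε k := fun k => mul_pos (pow_pos hα0 k) (by linarith)
  have hεmono : ∀ k l : ℕ, k ≤ l → ε l ≤ ε k := fun k l h =>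
    mul_le_mul_of_nonneg_right (pow_le_pow_of_le_one hα0.le hα1.le h) (by linarith)
  have hεle : ∀ k, ε k ≤ Ψ / 3 := fun k => by
    have := hεmono 0 k (Nat.zero_le _); simpa [hε] using this
  have hεsucc : ∀ k, ε (k + 1) = α * ε k := by
    intro k; simp only [hε, pow_succ]; ring
  set S1 : ℕ → Finset V := fun k => Finset.univ.filter (fun i => M t₀ - ε k < x (t₀ + k) i)
    with hS1
  set S2 : ℕ → Finset V := fun k => Finset.univ.filter (fun i => x (t₀ + k) i < m t₀ + ε k)
    with hS2
  have hkle : ∀ k : ℕ, ∀ i, i ∉ A → ∀ j ∈ insert i (inNbrs E i) \ R (t₀ + k) i,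
      x (t₀ + k) j ≤ M t₀ := fun k i hi j hj =>
    le_trans (kept_le E A F x R hN hA (t₀ + k) i hi (hupd _ i hi).1 j hj)
      (hMa t₀ (t₀ + k) (Nat.le_add_right _ _))
  have hkge : ∀ k : ℕ, ∀ i, i ∉ A → ∀ j ∈ insert i (inNbrs E i) \ R (t₀ + k) i,
      m t₀ ≤ x (t₀ + k) j := fun k i hi j hj =>
    le_trans (hma t₀ (t₀ + k) (Nat.le_add_right _ _))
      (kept_ge E A F x R hN hA (t₀ + k) i hi (hupd _ i hi).1 j hj)
  have hstep1 : ∀ k : ℕ, ∀ i, i ∉ A →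
      (∃ j ∈ insert i (inNbrs E i) \ R (t₀ + k) i, x (t₀ + k) j ≤ M t₀ - ε k) →
      x (t₀ + k + 1) i ≤ M t₀ - ε (k + 1) := by
    intro k i hi hex
    have h := step_ub E F α x R w hα0 (t₀ + k) i (hupd _ i hi)
      (hkle k i hi) hex (by linarith [hεpos k])
    rw [hεsucc k]
    linarith
  have hstep2 : ∀ k : ℕ, ∀ i, i ∉ A →
      (∃ j ∈ insert i (inNbrs E i) \ R (t₀ + k) i, m t₀ + ε k ≤ x (t₀ + k) j) →
      m t₀ + ε (k + 1) ≤ x (t₀ + k + 1) i := by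
    intro k i hi hex
    have h := step_lb E F α x R w hα0 (t₀ + k) i (hupd _ i hi)
      (hkge k i hi) hex (by linarith [hεpos k])
    rw [hεsucc k]
    linarith
  have hadd1 : ∀ k : ℕ, t₀ + (k + 1) = t₀ + k + 1 := fun k => by omega
  have hout1 : ∀ k : ℕ, ∀ i, i ∉ A → i ∉ S1 k → i ∉ S1 (k + 1) := by
    intro k i hi hiS
    have hx : x (t₀ + k) i ≤ M t₀ - ε k := by
      by_contra h
      exact hiS (Finset.mem_filter.2 ⟨Finset.mem_univ _, by linarith [not_le.1 h]⟩)
    have h := hstep1 k i hi ⟨i, kept_self E F x R hsimple _ i (hupd _ i hi).1, hx⟩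
    intro hmem
    have := (Finset.mem_filter.1 hmem).2
    rw [hadd1 k] at this
    linarith
  have hout2 : ∀ k : ℕ, ∀ i, i ∉ A → i ∉ S2 k → i ∉ S2 (k + 1) := by
    intro k i hi hiS
    have hx : m t₀ + ε k ≤ x (t₀ + k) i := by
      by_contra h
      exact hiS (Finset.mem_filter.2 ⟨Finset.mem_univ _, by linarith [not_le.1 h]⟩)
    have h := hstep2 k i hi ⟨i, kept_self E F x R hsimple _ i (hupd _ i hi).1, hx⟩
    intro hmem
    have := (Finset.mem_filter.1 hmem).2
    rw [hadd1 k] at this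
    linarith
  have hin1 : ∀ k : ℕ, ∀ i, i ∉ A → i ∈ reachSet E (F + 1) (S1 k) → i ∉ S1 (k + 1) := by
    intro k i hi hir
    obtain ⟨hiS1, hcard⟩ := Finset.mem_filter.1 hir
    have hxi : M t₀ - ε k < x (t₀ + k) i := (Finset.mem_filter.1 hiS1).2
    obtain ⟨Ra, Rb, hR, hRa_sub, hRa_case, hRb_sub, hRb_case⟩ := (hupd (t₀ + k) i hi).1
    have hRbF : Rb.card ≤ F := by rcases hRb_case with ⟨_, h⟩ | ⟨h, _⟩; exacts [h, h.le]
    have hTR : (inNbrs E i \ S1 k) ∩ R (t₀ + k) i ⊆ Rb := by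
      intro j hj
      obtain ⟨hjT, hjR⟩ := Finset.mem_inter.1 hj
      rw [hR] at hjR
      rcases Finset.mem_union.1 hjR with hja | hjb
      · exfalso
        have h1 : x (t₀ + k) i < x (t₀ + k) j := (Finset.mem_filter.1 (hRa_sub hja)).2
        have h2 : j ∉ S1 k := (Finset.mem_sdiff.1 hjT).2
        have h3 : x (t₀ + k) j ≤ M t₀ - ε k := by
          by_contra h
          exact h2 (Finset.mem_filter.2 ⟨Finset.mem_univ _, not_le.1 h⟩)
        linarith
      · exact hjb
    have hne : ((inNbrs E i \ S1 k) \ R (t₀ + k) i).Nonempty := by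
      rw [Finset.nonempty_iff_ne_empty]
      intro hempty
      have hsub : inNbrs E i \ S1 k ⊆ R (t₀ + k) i := by
        rwa [← Finset.sdiff_eq_empty_iff_subset]
      have hsub2 : inNbrs E i \ S1 k ⊆ Rb := fun j hj =>
        hTR (Finset.mem_inter.2 ⟨hj, hsub hj⟩)
      have := Finset.card_le_card hsub2
      omega
    obtain ⟨j, hj⟩ := hne
    obtain ⟨hjT, hjR⟩ := Finset.mem_sdiff.1 hj
    obtain ⟨hjV, hjS⟩ := Finset.mem_sdiff.1 hjT
    have hjx : x (t₀ + k) j ≤ M t₀ - ε k := by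
      by_contra h
      exact hjS (Finset.mem_filter.2 ⟨Finset.mem_univ _, not_le.1 h⟩)
    have hjkept : j ∈ insert i (inNbrs E i) \ R (t₀ + k) i :=
      Finset.mem_sdiff.2 ⟨Finset.mem_insert_of_mem hjV, hjR⟩
    have h := hstep1 k i hi ⟨j, hjkept, hjx⟩
    intro hmem
    have := (Finset.mem_filter.1 hmem).2
    rw [hadd1 k] at this
    linarith
  have hin2 : ∀ k : ℕ, ∀ i, i ∉ A → i ∈ reachSet E (F + 1) (S2 k) → i ∉ S2 (k + 1) := by
    intro k i hi hir
    obtain ⟨hiS2, hcard⟩ := Finset.mem_filter.1 hir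
    have hxi : x (t₀ + k) i < m t₀ + ε k := (Finset.mem_filter.1 hiS2).2
    obtain ⟨Ra, Rb, hR, hRa_sub, hRa_case, hRb_sub, hRb_case⟩ := (hupd (t₀ + k) i hi).1
    have hRaF : Ra.card ≤ F := by rcases hRa_case with ⟨_, h⟩ | ⟨h, _⟩; exacts [h, h.le]
    have hTR : (inNbrs E i \ S2 k) ∩ R (t₀ + k) i ⊆ Ra := by
      intro j hj
      obtain ⟨hjT, hjR⟩ := Finset.mem_inter.1 hj
      rw [hR] at hjR
      rcases Finset.mem_union.1 hjR with hja | hjb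
      · exact hja
      · exfalso
        have h1 : x (t₀ + k) j < x (t₀ + k) i := (Finset.mem_filter.1 (hRb_sub hjb)).2
        have h2 : j ∉ S2 k := (Finset.mem_sdiff.1 hjT).2
        have h3 : m t₀ + ε k ≤ x (t₀ + k) j := by
          by_contra h
          exact h2 (Finset.mem_filter.2 ⟨Finset.mem_univ _, not_le.1 h⟩)
        linarith
    have hne : ((inNbrs E i \ S2 k) \ R (t₀ + k) i).Nonempty := by
      rw [Finset.nonempty_iff_ne_empty]
      intro hempty
      have hsub : inNbrs E i \ S2 k ⊆ R (t₀ + k) i := by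
        rwa [← Finset.sdiff_eq_empty_iff_subset]
      have hsub2 : inNbrs E i \ S2 k ⊆ Ra := fun j hj =>
        hTR (Finset.mem_inter.2 ⟨hj, hsub hj⟩)
      have := Finset.card_le_card hsub2
      omega
    obtain ⟨j, hj⟩ := hne
    obtain ⟨hjT, hjR⟩ := Finset.mem_sdiff.1 hj
    obtain ⟨hjV, hjS⟩ := Finset.mem_sdiff.1 hjT
    have hjx : m t₀ + ε k ≤ x (t₀ + k) j := by
      by_contra h
      exact hjS (Finset.mem_filter.2 ⟨Finset.mem_univ _, not_le.1 h⟩)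
    have hjkept : j ∈ insert i (inNbrs E i) \ R (t₀ + k) i :=
      Finset.mem_sdiff.2 ⟨Finset.mem_insert_of_mem hjV, hjR⟩
    have h := hstep2 k i hi ⟨j, hjkept, hjx⟩
    intro hmem
    have := (Finset.mem_filter.1 hmem).2
    rw [hadd1 k] at this
    linarith
  have hdisj : ∀ k, Disjoint (S1 k) (S2 k) := by
    intro k
    rw [Finset.disjoint_left]
    intro i h1 h2
    have h1' := (Finset.mem_filter.1 h1).2
    have h2' := (Finset.mem_filter.1 h2).2
    have := hεle k
    linarith
  have hmono1 : ∀ k, S1 (k + 1) ∩ (Finset.univ \ A) ⊆ S1 k ∩ (Finset.univ \ A) := by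
    intro k i hi
    obtain ⟨h1, hN'⟩ := Finset.mem_inter.1 hi
    have hiA : i ∉ A := (Finset.mem_sdiff.1 hN').2
    refine Finset.mem_inter.2 ⟨?_, hN'⟩
    by_contra h
    exact hout1 k i hiA h h1
  have hmono2 : ∀ k, S2 (k + 1) ∩ (Finset.univ \ A) ⊆ S2 k ∩ (Finset.univ \ A) := by
    intro k i hi
    obtain ⟨h1, hN'⟩ := Finset.mem_inter.1 hi
    have hiA : i ∉ A := (Finset.mem_sdiff.1 hN').2
    refine Finset.mem_inter.2 ⟨?_, hN'⟩
    by_contra h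
    exact hout2 k i hiA h h1
  have hfind : ∀ k, (S1 k ∩ (Finset.univ \ A)).Nonempty → (S2 k ∩ (Finset.univ \ A)).Nonempty →
      ∃ i, i ∉ A ∧ (i ∈ reachSet E (F + 1) (S1 k) ∨ i ∈ reachSet E (F + 1) (S2 k)) := by
    intro k h1 h2
    obtain ⟨i1, hi1⟩ := h1
    obtain ⟨i2, hi2⟩ := h2
    obtain ⟨hi1S, hi1N⟩ := Finset.mem_inter.1 hi1
    obtain ⟨hi2S, hi2N⟩ := Finset.mem_inter.1 hi2
    have h1ne : (S1 k).Nonempty := ⟨i1, hi1S⟩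
    have h2ne : (S2 k).Nonempty := ⟨i2, hi2S⟩
    rcases hrob (S1 k) (S2 k) h1ne h2ne (hdisj k) with h | h | h
    · have heq : reachSet E (F + 1) (S1 k) = S1 k :=
        Finset.eq_of_subset_of_card_le (Finset.filter_subset _ _) (le_of_eq h.symm)
      exact ⟨i1, (Finset.mem_sdiff.1 hi1N).2, Or.inl (by rw [heq]; exact hi1S)⟩
    · have heq : reachSet E (F + 1) (S2 k) = S2 k :=
        Finset.eq_of_subset_of_card_le (Finset.filter_subset _ _) (le_of_eq h.symm)
      exact ⟨i2, (Finset.mem_sdiff.1 hi2N).2, Or.inr (by rw [heq]; exact hi2S)⟩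
    · have hdisjr : Disjoint (reachSet E (F + 1) (S1 k)) (reachSet E (F + 1) (S2 k)) :=
        (hdisj k).mono (Finset.filter_subset _ _) (Finset.filter_subset _ _)
      have hcard : A.card < (reachSet E (F + 1) (S1 k) ∪ reachSet E (F + 1) (S2 k)).card := by
        rw [Finset.card_union_of_disjoint hdisjr]
        omega
      have hnotsub : ¬ (reachSet E (F + 1) (S1 k) ∪ reachSet E (F + 1) (S2 k)) ⊆ A := by
        intro hsub
        exact absurd (Finset.card_le_card hsub) (not_le.2 hcard)
      obtain ⟨i, hiu, hiA⟩ := Finset.not_subset.1 hnotsub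
      exact ⟨i, hiA, Finset.mem_union.1 hiu⟩
  have hdec : ∀ k, (S1 k ∩ (Finset.univ \ A)).Nonempty → (S2 k ∩ (Finset.univ \ A)).Nonempty →
      (S1 (k + 1) ∩ (Finset.univ \ A)).card + (S2 (k + 1) ∩ (Finset.univ \ A)).card <
      (S1 k ∩ (Finset.univ \ A)).card + (S2 k ∩ (Finset.univ \ A)).card := by
    intro k h1 h2
    obtain ⟨i, hiA, hcase⟩ := hfind k h1 h2
    rcases hcase with hir | hir
    · have hiS1 : i ∈ S1 k := Finset.filter_subset _ _ hir
      have hnot : i ∉ S1 (k + 1) := hin1 k i hiA hir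
      have hss : S1 (k + 1) ∩ (Finset.univ \ A) ⊂ S1 k ∩ (Finset.univ \ A) := by
        refine Finset.ssubset_iff_of_subset (hmono1 k) |>.2 ?_
        exact ⟨i, Finset.mem_inter.2 ⟨hiS1, Finset.mem_sdiff.2 ⟨Finset.mem_univ _, hiA⟩⟩,
          fun h => hnot (Finset.mem_inter.1 h).1⟩
      have ha := Finset.card_lt_card hss
      have hb := Finset.card_le_card (hmono2 k)
      omega
    · have hiS2 : i ∈ S2 k := Finset.filter_subset _ _ hir
      have hnot : i ∉ S2 (k + 1) := hin2 k i hiA hir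
      have hss : S2 (k + 1) ∩ (Finset.univ \ A) ⊂ S2 k ∩ (Finset.univ \ A) := by
        refine Finset.ssubset_iff_of_subset (hmono2 k) |>.2 ?_
        exact ⟨i, Finset.mem_inter.2 ⟨hiS2, Finset.mem_sdiff.2 ⟨Finset.mem_univ _, hiA⟩⟩,
          fun h => hnot (Finset.mem_inter.1 h).1⟩
      have ha := Finset.card_lt_card hss
      have hb := Finset.card_le_card (hmono1 k)
      omega
  have hterm : ∃ k ≤ c, (S1 k ∩ (Finset.univ \ A)) = ∅ ∨ (S2 k ∩ (Finset.univ \ A)) = ∅ := by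
    by_contra hcon
    push_neg at hcon
    have hne : ∀ k ≤ c, (S1 k ∩ (Finset.univ \ A)).Nonempty ∧
        (S2 k ∩ (Finset.univ \ A)).Nonempty := by
      intro k hk
      obtain ⟨h1, h2⟩ := hcon k hk
      exact ⟨h1, h2⟩
    have key : ∀ k, k ≤ c →
        (S1 k ∩ (Finset.univ \ A)).card + (S2 k ∩ (Finset.univ \ A)).card + k ≤
        (S1 0 ∩ (Finset.univ \ A)).card + (S2 0 ∩ (Finset.univ \ A)).card := by
      intro k
      induction k with
      | zero => omega
      | succ n ih =>
        intro hk
        have hn := ih (Nat.le_of_succ_le hk)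
        obtain ⟨h1, h2⟩ := hne n (Nat.le_of_succ_le hk)
        have := hdec n h1 h2
        omega
    have h0 : (S1 0 ∩ (Finset.univ \ A)).card + (S2 0 ∩ (Finset.univ \ A)).card ≤ c := by
      have hd : Disjoint (S1 0 ∩ (Finset.univ \ A)) (S2 0 ∩ (Finset.univ \ A)) :=
        (hdisj 0).mono Finset.inter_subset_left Finset.inter_subset_left
      rw [← Finset.card_union_of_disjoint hd]
      calc ((S1 0 ∩ (Finset.univ \ A)) ∪ (S2 0 ∩ (Finset.univ \ A))).card
          ≤ (Finset.univ : Finset V).card := Finset.card_le_card (Finset.subset_univ _)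
        _ = c := Finset.card_univ
    have hc := key c le_rfl
    obtain ⟨h1, h2⟩ := hne c le_rfl
    have := Finset.card_pos.2 h1
    have := Finset.card_pos.2 h2
    omega
  obtain ⟨k, hkc, hcase⟩ := hterm
  have hψmono : M (t₀ + c) - m (t₀ + c) ≤ M (t₀ + k) - m (t₀ + k) := by
    have h1 := hMa (t₀ + k) (t₀ + c) (by omega)
    have h2 := hma (t₀ + k) (t₀ + c) (by omega)
    linarith
  have hεkc : ε c ≤ ε k := hεmono k c hkc
  have hrw : (1 - α ^ c / 3) * Ψ = Ψ - ε c := by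
    simp only [hε]; ring
  rcases hcase with h1 | h2
  · have hMk : M (t₀ + k) ≤ M t₀ - ε k := by
      apply Finset.sup'_le
      intro i hi
      have hnot : i ∉ S1 k := by
        intro h
        have : i ∈ S1 k ∩ (Finset.univ \ A) := Finset.mem_inter.2 ⟨h, hi⟩
        rw [h1] at this
        exact absurd this (Finset.notMem_empty _)
      by_contra h
      exact hnot (Finset.mem_filter.2 ⟨Finset.mem_univ _, not_le.1 h⟩)
    have hmk : m t₀ ≤ m (t₀ + k) := hma _ _ (Nat.le_add_right _ _)
    linarith
  · have hmk : m t₀ + ε k ≤ m (t₀ + k) := by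
      apply Finset.le_inf'
      intro i hi
      have hnot : i ∉ S2 k := by
        intro h
        have : i ∈ S2 k ∩ (Finset.univ \ A) := Finset.mem_inter.2 ⟨h, hi⟩
        rw [h2] at this
        exact absurd this (Finset.notMem_empty _)
      by_contra h
      exact hnot (Finset.mem_filter.2 ⟨Finset.mem_univ _, not_le.1 h⟩)
    have hMk : M (t₀ + k) ≤ M t₀ := hMa _ _ (Nat.le_add_right _ _)
    linarith

end Contraction

/-- Sufficiency for the `F`-total malicious model: on a time-invariant
`(F+1,F+1)`-robust digraph, if each normal node runs discrete-time ARC-P with parameter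
`F` and the malicious adversary set `A` satisfies `|A| ≤ F`, then the normal nodes
achieve resilient asymptotic consensus: they all converge to a common limit `L`, and
every normal value stays in `[m[0], M[0]]` for all time, for any initial values, any
valid weights and removed sets, and any adversary value trajectories. -/
theorem stmt9 {V : Type*} [Fintype V] [DecidableEq V]
    (hn : 2 ≤ Fintype.card V)
    (E : Finset (V × V)) (hsimple : ∀ i : V, (i, i) ∉ E)
    (A : Finset V) (hN : (Finset.univ \ A).Nonempty)
    (F : ℕ) (α : ℝ) (hα0 : 0 < α) (hα1 : α < 1)
    (hA : A.card ≤ F)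
    (hrob : RSRobust E (F + 1) (F + 1))
    (x : ℕ → V → ℝ) (R : ℕ → V → Finset V) (w : ℕ → V → V → ℝ)
    (hupd : ∀ t : ℕ, ∀ i ∉ A, ArcpUpdate E F α x R w i t) :
    ∃ L : ℝ,
      (∀ i ∉ A, Filter.Tendsto (fun t => x t i) Filter.atTop (nhds L)) ∧
      ∀ t : ℕ, ∀ i ∉ A,
        x t i ∈ Set.Icc ((Finset.univ \ A).inf' hN (x 0))
          ((Finset.univ \ A).sup' hN (x 0)) := by
  set M : ℕ → ℝ := fun t => (Finset.univ \ A).sup' hN (x t) with hM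
  set m : ℕ → ℝ := fun t => (Finset.univ \ A).inf' hN (x t) with hm
  have hMa : Antitone M := M_anti E A F α x R w hsimple hN hα0 hA hupd
  have hma : Monotone m := m_mono E A F α x R w hsimple hN hα0 hA hupd
  have hxle : ∀ t : ℕ, ∀ i, i ∉ A → x t i ≤ M t := fun t i hi =>
    Finset.le_sup' _ (Finset.mem_sdiff.2 ⟨Finset.mem_univ _, hi⟩)
  have hxge : ∀ t : ℕ, ∀ i, i ∉ A → m t ≤ x t i := fun t i hi =>
    Finset.inf'_le _ (Finset.mem_sdiff.2 ⟨Finset.mem_univ _, hi⟩)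
  have hmM : ∀ t, m t ≤ M t := by
    intro t
    obtain ⟨i, hi⟩ := hN
    exact le_trans (Finset.inf'_le _ hi) (Finset.le_sup' _ hi)
  set c := Fintype.card V with hc
  set γ : ℝ := 1 - α ^ c / 3 with hγ
  have hαc1 : α ^ c ≤ 1 := pow_le_one₀ hα0.le hα1.le
  have hαc0 : 0 < α ^ c := pow_pos hα0 c
  have hγ0 : 0 ≤ γ := by rw [hγ]; linarith
  have hγ1 : γ < 1 := by rw [hγ]; linarith
  have hΨc : ∀ t₀ : ℕ, M (t₀ + c) - m (t₀ + c) ≤ γ * (M t₀ - m t₀) := fun t₀ =>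
    contraction E A F α x R w hsimple hN hα0 hα1 hA hrob hupd t₀
  have hΨanti : ∀ s t : ℕ, s ≤ t → M t - m t ≤ M s - m s := by
    intro s t h
    have := hMa h
    have := hma h
    linarith
  have hgeon : ∀ n : ℕ, M (n * c) - m (n * c) ≤ γ ^ n * (M 0 - m 0) := by
    intro n
    induction n with
    | zero => simp
    | succ n ih =>
      have h1 : (n + 1) * c = n * c + c := by ring
      rw [h1]
      calc M (n * c + c) - m (n * c + c) ≤ γ * (M (n * c) - m (n * c)) := hΨc (n * c)
        _ ≤ γ * (γ ^ n * (M 0 - m 0)) := mul_le_mul_of_nonneg_left ih hγ0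
        _ = γ ^ (n + 1) * (M 0 - m 0) := by ring
  have hcpos : 0 < c := by omega
  have hbound : ∀ t : ℕ, M t - m t ≤ γ ^ (t / c) * (M 0 - m 0) := fun t =>
    le_trans (hΨanti _ _ (Nat.div_mul_le_self t c)) (hgeon (t / c))
  have hdiv : Filter.Tendsto (fun t : ℕ => t / c) Filter.atTop Filter.atTop := by
    apply Filter.tendsto_atTop_atTop.2
    intro b
    exact ⟨b * c, fun t ht => (Nat.le_div_iff_mul_le hcpos).2 ht⟩
  have hg0 : Filter.Tendsto (fun t : ℕ => γ ^ (t / c) * (M 0 - m 0)) Filter.atTop (nhds 0) := by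
    have h := ((tendsto_pow_atTop_nhds_zero_of_lt_one hγ0 hγ1).comp hdiv).mul_const (M 0 - m 0)
    simpa using h
  have hΨ0 : ∀ t, 0 ≤ M t - m t := fun t => by linarith [hmM t]
  have hΨtend : Filter.Tendsto (fun t => M t - m t) Filter.atTop (nhds 0) :=
    squeeze_zero hΨ0 hbound hg0
  have hMbdd : BddBelow (Set.range M) := by
    refine ⟨m 0, ?_⟩
    rintro y ⟨t, rfl⟩
    exact le_trans (hma (Nat.zero_le t)) (hmM t)
  have hMtend : Filter.Tendsto M Filter.atTop (nhds (⨅ t, M t)) :=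
    tendsto_atTop_ciInf hMa hMbdd
  have hmtend : Filter.Tendsto m Filter.atTop (nhds (⨅ t, M t)) := by
    have h := hMtend.sub hΨtend
    simpa using h
  refine ⟨⨅ t, M t, ?_, ?_⟩
  · intro i hi
    exact tendsto_of_tendsto_of_tendsto_of_le_of_le hmtend hMtend
      (fun t => hxge t i hi) (fun t => hxle t i hi)
  · intro t i hi
    constructor
    · exact le_trans (hma (Nat.zero_le t)) (hxge t i hi)
    · exact le_trans (hxle t i hi) (hMa (Nat.zero_le t))
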